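/- Let F be a field of characteristic 2 and let α, β, a, b ∈ F with β ≠ 0 and a² + a·b + b²·α ≠ 0. Then there is an F-algebra isomorphism [α, β) ≅ [α, (a² + a·b + b²·α)·β). -/

import Mathlib

open scoped TensorProduct

/-- The relations defining the characteristic two quaternion symbol algebra `[α, β)`:
`x² + x = α`, `y² = β`, `xy + yx = y`. -/
inductive QuatSymbolRel (F : Type*) [CommRing F] (α β : F) :
    FreeAlgebra F (Fin 2) → FreeAlgebra F (Fin 2) → Prop
  | x_rel : QuatSymbolRel F α β
      (FreeAlgebra.ι F (0 : Fin 2) * FreeAlgebra.ι F (0 : Fin 2) + FreeAlgebra.ι F (0 : Fin 2))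
      (algebraMap F (FreeAlgebra F (Fin 2)) α)
  | y_rel : QuatSymbolRel F α β
      (FreeAlgebra.ι F (1 : Fin 2) * FreeAlgebra.ι F (1 : Fin 2))
      (algebraMap F (FreeAlgebra F (Fin 2)) β)
  | xy_rel : QuatSymbolRel F α β
      (FreeAlgebra.ι F (0 : Fin 2) * FreeAlgebra.ι F (1 : Fin 2) +
        FreeAlgebra.ι F (1 : Fin 2) * FreeAlgebra.ι F (0 : Fin 2))
      (FreeAlgebra.ι F (1 : Fin 2))

/-- The characteristic two quaternion symbol algebra `[α, β)` over `F`: the `F`-algebra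
generated by `x, y` subject to `x² + x = α`, `y² = β`, `xy + yx = y`. -/
def QuatSymbol (F : Type*) [CommRing F] (α β : F) :=
  RingQuot (QuatSymbolRel F α β)

noncomputable instance (F : Type*) [CommRing F] (α β : F) : Ring (QuatSymbol F α β) :=
  inferInstanceAs (Ring (RingQuot (QuatSymbolRel F α β)))

noncomputable instance (F : Type*) [CommRing F] (α β : F) : Algebra F (QuatSymbol F α β) :=
  inferInstanceAs (Algebra F (RingQuot (QuatSymbolRel F α β)))


namespace QuatLambdaAux

variable {F : Type*} [Field F] [CharP F 2]
variable {A : Type*} [Ring A] [Algebra F A]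

lemma two_eq_zero (F : Type*) [Field F] [CharP F 2] (A : Type*) [Ring A] [Algebra F A] :
    (2 : A) = 0 := by
  rw [show (2 : A) = algebraMap F A 2 from (map_ofNat _ 2).symm,
    show (2 : F) = ((2 : ℕ) : F) by norm_num, CharP.cast_eq_zero F 2, map_zero]

lemma neg_eq (F : Type*) [Field F] [CharP F 2] {A : Type*} [Ring A] [Algebra F A] (z : A) :
    -z = z := by
  have h : z + z = 0 := by rw [← two_mul, two_eq_zero F A, zero_mul]
  exact neg_eq_of_add_eq_zero_left h

/-- the element `c + d x`. -/
def u (c d : F) (x : A) : A := c • (1 : A) + d • x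

lemma u_mul {α : F} {x : A} (hx : x * x = α • (1:A) + x) (c d c' d' : F) :
    u c d x * u c' d' x = u (c * c' + d * d' * α) (c * d' + d * c' + d * d') x := by
  simp only [u, add_mul, mul_add, smul_mul_assoc, mul_smul_comm, smul_smul, hx, smul_add,
    one_mul, mul_one]
  module

lemma x_mul_u {α : F} {x : A} (hx : x * x = α • (1:A) + x) (c d : F) :
    x * u c d x = u c d x * x := by
  simp only [u, add_mul, mul_add, smul_mul_assoc, mul_smul_comm, one_mul, mul_one]

lemma y_mul_u {x y : A} (hyx : y * x = x * y + y) (c d : F) :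
    y * u c d x = u (c + d) d x * y := by
  simp only [u, add_mul, mul_add, smul_mul_assoc, mul_smul_comm, hyx, one_mul, mul_one]
  module

set_option linter.unusedSectionVars false

lemma uy_sq {α β' : F} {x y : A} (hx : x * x = α • (1:A) + x) (hy : y * y = β' • (1:A))
    (hyx : y * x = x * y + y) (c d : F) :
    (u c d x * y) * (u c d x * y) = ((c ^ 2 + c * d + d ^ 2 * α) * β') • (1:A) := by
  have h2 : (2 : F) = 0 := two_eq_zero F F
  calc u c d x * y * (u c d x * y)
      = u c d x * (y * u c d x * y) := by rw [mul_assoc]; rw [← mul_assoc y]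
    _ = u c d x * (u (c + d) d x * y * y) := by rw [y_mul_u hyx]
    _ = u c d x * u (c + d) d x * (y * y) := by rw [mul_assoc (u (c+d) d x), ← mul_assoc]
    _ = u (c * (c + d) + d * d * α) (c * d + d * (c + d) + d * d) x * (y * y) := by
        rw [u_mul hx]
    _ = ((c ^ 2 + c * d + d ^ 2 * α) • (1:A)) * (β' • (1:A)) := by
        rw [hy, show c * d + d * (c + d) + d * d = 0 by linear_combination (c*d + d*d) * h2,
          show c * (c + d) + d * d * α = c ^ 2 + c * d + d ^ 2 * α by ring,
          u, zero_smul, add_zero]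
    _ = ((c ^ 2 + c * d + d ^ 2 * α) * β') • (1:A) := by
        rw [smul_mul_assoc, one_mul, smul_smul]

lemma x_uy {α : F} {x y : A} (hx : x * x = α • (1:A) + x) (hyx : y * x = x * y + y) (c d : F) :
    x * (u c d x * y) + (u c d x * y) * x = u c d x * y := by
  have h2 : (2 : A) = 0 := two_eq_zero F A
  have l : x * (u c d x * y) = u c d x * (x * y) := by
    rw [← mul_assoc, x_mul_u hx, mul_assoc]
  have r : (u c d x * y) * x = u c d x * (x * y) + u c d x * y := by
    rw [mul_assoc, hyx, mul_add]
  rw [l, r, ← add_assoc, ← two_mul, h2, zero_mul, zero_add]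

end QuatLambdaAux

namespace QuatLambdaAux

variable {F : Type*} [Field F] [CharP F 2] (α : F)

noncomputable def Xg (β' : F) : QuatSymbol F α β' :=
  RingQuot.mkAlgHom F (QuatSymbolRel F α β') (FreeAlgebra.ι F (0 : Fin 2))

noncomputable def Yg (β' : F) : QuatSymbol F α β' :=
  RingQuot.mkAlgHom F (QuatSymbolRel F α β') (FreeAlgebra.ι F (1 : Fin 2))

lemma Xg_sq (β' : F) :
    Xg α β' * Xg α β' + Xg α β' = algebraMap F (QuatSymbol F α β') α := by
  have h := RingQuot.mkAlgHom_rel F (QuatSymbolRel.x_rel (F := F) (α := α) (β := β'))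
  simp only [map_add, map_mul, AlgHom.commutes] at h
  exact h

lemma Xg_rel (β' : F) : Xg α β' * Xg α β' = α • (1 : QuatSymbol F α β') + Xg α β' := by
  have h := Xg_sq α β'
  have h' := eq_sub_of_add_eq h
  rw [h', sub_eq_add_neg, neg_eq F, Algebra.algebraMap_eq_smul_one]

lemma Yg_rel (β' : F) : Yg α β' * Yg α β' = β' • (1 : QuatSymbol F α β') := by
  have h := RingQuot.mkAlgHom_rel F (QuatSymbolRel.y_rel (F := F) (α := α) (β := β'))
  simp only [map_mul, AlgHom.commutes] at h
  rw [Algebra.algebraMap_eq_smul_one] at h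
  exact h

lemma XYg_rel (β' : F) :
    Xg α β' * Yg α β' + Yg α β' * Xg α β' = Yg α β' := by
  have h := RingQuot.mkAlgHom_rel F (QuatSymbolRel.xy_rel (F := F) (α := α) (β := β'))
  simp only [map_add, map_mul] at h
  exact h

lemma YXg_rel (β' : F) : Yg α β' * Xg α β' = Xg α β' * Yg α β' + Yg α β' := by
  have h := XYg_rel α β'
  have h' := eq_sub_of_add_eq' h
  rw [h', sub_eq_add_neg, neg_eq F, add_comm]

noncomputable def toHom (β₁ β₂ c d : F)
    (hcd : (c ^ 2 + c * d + d ^ 2 * α) * β₂ = β₁) :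
    QuatSymbol F α β₁ →ₐ[F] QuatSymbol F α β₂ :=
  RingQuot.liftAlgHom F ⟨FreeAlgebra.lift F
      ![Xg α β₂, u c d (Xg α β₂) * Yg α β₂], by
    intro p q r
    cases r with
    | x_rel =>
      simp only [map_add, map_mul, FreeAlgebra.lift_ι_apply, Matrix.cons_val_zero,
        AlgHom.commutes]
      exact Xg_sq α β₂
    | y_rel =>
      simp only [map_mul, FreeAlgebra.lift_ι_apply, Matrix.cons_val_one, Matrix.head_cons,
        Matrix.cons_val_zero, AlgHom.commutes]
      rw [uy_sq (Xg_rel α β₂) (Yg_rel α β₂) (YXg_rel α β₂), hcd,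
        Algebra.algebraMap_eq_smul_one]
    | xy_rel =>
      simp only [map_add, map_mul, FreeAlgebra.lift_ι_apply, Matrix.cons_val_zero,
        Matrix.cons_val_one, Matrix.head_cons]
      exact x_uy (Xg_rel α β₂) (YXg_rel α β₂) c d⟩

lemma toHom_X (β₁ β₂ c d : F) (hcd : (c ^ 2 + c * d + d ^ 2 * α) * β₂ = β₁) :
    toHom α β₁ β₂ c d hcd (Xg α β₁) = Xg α β₂ := by
  show toHom α β₁ β₂ c d hcd
      (RingQuot.mkAlgHom F (QuatSymbolRel F α β₁) (FreeAlgebra.ι F (0 : Fin 2))) = _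
  rw [toHom]
  exact (RingQuot.liftAlgHom_mkAlgHom_apply _ _ _ _).trans (by simp)

lemma toHom_Y (β₁ β₂ c d : F) (hcd : (c ^ 2 + c * d + d ^ 2 * α) * β₂ = β₁) :
    toHom α β₁ β₂ c d hcd (Yg α β₁) = u c d (Xg α β₂) * Yg α β₂ := by
  show toHom α β₁ β₂ c d hcd
      (RingQuot.mkAlgHom F (QuatSymbolRel F α β₁) (FreeAlgebra.ι F (1 : Fin 2))) = _
  rw [toHom]
  exact (RingQuot.liftAlgHom_mkAlgHom_apply _ _ _ _).trans (by simp)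

lemma map_u {A B : Type*} [Ring A] [Algebra F A] [Ring B] [Algebra F B]
    (φ : A →ₐ[F] B) (c d : F) (x : A) : φ (u c d x) = u c d (φ x) := by
  simp [u, map_add, map_smul, map_one]

lemma comp_toHom (β₁ β₂ c d c' d' : F)
    (hcd : (c ^ 2 + c * d + d ^ 2 * α) * β₂ = β₁)
    (hcd' : (c' ^ 2 + c' * d' + d' ^ 2 * α) * β₁ = β₂)
    (hu1 : c * c' + d * d' * α = 1) (hu2 : c * d' + d * c' + d * d' = 0) :
    (toHom α β₂ β₁ c' d' hcd').comp (toHom α β₁ β₂ c d hcd) =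
      AlgHom.id F (QuatSymbol F α β₁) := by
  apply RingQuot.ringQuot_ext'
  apply FreeAlgebra.hom_ext
  funext i
  fin_cases i
  · show (toHom α β₂ β₁ c' d' hcd') (toHom α β₁ β₂ c d hcd (Xg α β₁)) = Xg α β₁
    rw [toHom_X, toHom_X]
  · show (toHom α β₂ β₁ c' d' hcd') (toHom α β₁ β₂ c d hcd (Yg α β₁)) = Yg α β₁
    rw [toHom_Y, map_mul, map_u, toHom_X, toHom_Y, ← mul_assoc,
      u_mul (Xg_rel α β₁), hu1, hu2, u, one_smul, zero_smul, add_zero, one_mul]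

end QuatLambdaAux

/-- A `Λ₁` step on one symbol: `[α,β) ≅ [α, (a² + ab + b²α)·β)` when `a² + ab + b²α ≠ 0`. -/
theorem quatSymbol_lambda1_inseparable (F : Type*) [Field F] [CharP F 2] (α β a b : F)
    (hβ : β ≠ 0) (h : a ^ 2 + a * b + b ^ 2 * α ≠ 0) :
    Nonempty (QuatSymbol F α β ≃ₐ[F] QuatSymbol F α ((a ^ 2 + a * b + b ^ 2 * α) * β)) := by
  classical
  set N := a ^ 2 + a * b + b ^ 2 * α with hN
  have h2 : (2 : F) = 0 := QuatLambdaAux.two_eq_zero F F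
  have hg : (a ^ 2 + a * b + b ^ 2 * α) * β = N * β := by rw [hN]
  have key : (a + b) ^ 2 + (a + b) * b + b ^ 2 * α = N := by
    rw [hN]; linear_combination (a * b + b ^ 2) * h2
  have hf : (((a + b) / N) ^ 2 + ((a + b) / N) * (b / N) + (b / N) ^ 2 * α) * (N * β) = β := by
    have e : ((a + b) / N) ^ 2 + ((a + b) / N) * (b / N) + (b / N) ^ 2 * α
        = ((a + b) ^ 2 + (a + b) * b + b ^ 2 * α) / N ^ 2 := by
      rw [div_pow, div_pow, div_mul_div_comm, div_mul_eq_mul_div, ← sq N, ← add_div,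
        ← add_div]
    rw [e, key, sq, div_mul_eq_mul_div, mul_div_assoc, mul_div_assoc]
    field_simp
  have hu1 : a * ((a + b) / N) + b * (b / N) * α = 1 := by
    field_simp
    ring
  have hu2 : a * (b / N) + b * ((a + b) / N) + b * (b / N) = 0 := by
    field_simp
    linear_combination (a * b + b ^ 2) * h2
  have hu1' : ((a + b) / N) * a + (b / N) * b * α = 1 := by
    rw [← hu1]; ring
  have hu2' : ((a + b) / N) * b + (b / N) * a + (b / N) * b = 0 := by
    rw [← hu2]; ring
  exact ⟨AlgEquiv.ofAlgHom
    (QuatLambdaAux.toHom α β (N * β) ((a + b) / N) (b / N) hf)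
    (QuatLambdaAux.toHom α (N * β) β a b hg)
    (QuatLambdaAux.comp_toHom α (N * β) β a b ((a + b) / N) (b / N) hg hf hu1 hu2)
    (QuatLambdaAux.comp_toHom α β (N * β) ((a + b) / N) (b / N) a b hf hg hu1' hu2')⟩
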